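/- Let G be a finite simple graph with an Eulerian independence complex, i.e., G is well-covered and for every independent set F of G (including F = ∅) one has I(G_F, −1) = (−1)^{α(G_F)}. If α(G) is odd, then I(G, −1/2) = 0. -/

import Mathlib

open scoped Classical

/-- A finset of vertices is independent if no two of its members are adjacent. -/
def IsIndep {W : Type*} (G : SimpleGraph W) (s : Finset W) : Prop :=
  ∀ x ∈ s, ∀ y ∈ s, ¬ G.Adj x y

/-- A maximal independent set: independent and not properly contained in another
independent set. -/
def IsMaxIndep {W : Type*} (G : SimpleGraph W) (s : Finset W) : Prop :=
  IsIndep G s ∧ ∀ t : Finset W, IsIndep G t → s ⊆ t → t = s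

/-- The independence number `α(G)`: the maximum size of an independent set. -/
noncomputable def indepNum {W : Type*} (G : SimpleGraph W) [Fintype W] : ℕ :=
  sSup {n | ∃ s : Finset W, IsIndep G s ∧ s.card = n}

/-- Trung's construction `Tr(H, v)`: three new vertices `a = Sum.inr 0`, `b = Sum.inr 1`,
`c = Sum.inr 2` are added to `H`; `c` is joined to `b` and to every neighbor of `v`,
`b` is joined to `a`, and `a` is joined to `v`. -/
def Tr {V : Type*} (H : SimpleGraph V) (v : V) : SimpleGraph (V ⊕ Fin 3) :=
  SimpleGraph.fromRel (fun x y =>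
    match x, y with
    | Sum.inl x, Sum.inl y => H.Adj x y
    | Sum.inl x, Sum.inr i => (i = 0 ∧ x = v) ∨ (i = 2 ∧ H.Adj x v)
    | Sum.inr i, Sum.inr j => (i = 0 ∧ j = 1) ∨ (i = 1 ∧ j = 2)
    | _, _ => False)

/-- The set of vertices remaining after deleting the closed neighborhood `N[F]`
of a set `F` of vertices. -/
def offNbhd {V : Type*} (G : SimpleGraph V) (F : Set V) : Set V :=
  {w | w ∉ F ∧ ∀ u ∈ F, ¬ G.Adj u w}

/-- `G_F`: the induced subgraph of `G` on `V(G) \ N[F]`. -/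
def delNbhd {V : Type*} (G : SimpleGraph V) (F : Set V) : SimpleGraph (offNbhd G F) :=
  G.induce (offNbhd G F)

/-- `H_v = H \ N[v]`. -/
def delVert {V : Type*} (H : SimpleGraph V) (v : V) : SimpleGraph (offNbhd H {v}) :=
  delNbhd H {v}

/-- The independence polynomial `I(G, x) = Σ_i a_i x^i` of a finite graph,
as a polynomial over `ℚ`. -/
noncomputable def indepPoly {W : Type*} (G : SimpleGraph W) [Fintype W] : Polynomial ℚ :=
  ∑ s ∈ Finset.univ.filter (fun s : Finset W => IsIndep G s),
    (Polynomial.X : Polynomial ℚ) ^ s.card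

/-- `a_i(G)`: the number of independent sets of size `i`, indexed by `ℤ`
(so that it is `0` for `i < 0`). -/
noncomputable def numIndep {W : Type*} (G : SimpleGraph W) [Fintype W] (i : ℤ) : ℕ :=
  (Finset.univ.filter (fun s : Finset W => IsIndep G s ∧ (s.card : ℤ) = i)).card

/-- A finite graph is well-covered if every maximal independent set has size `α(G)`. -/
def WellCovered {W : Type*} (G : SimpleGraph W) [Fintype W] : Prop :=
  ∀ s : Finset W, IsMaxIndep G s → s.card = indepNum G

/-- A finite graph is a `W₂` graph if it has at least two vertices and every pair of
disjoint independent sets is contained in a pair of disjoint maximum independent sets. -/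
def IsW2 {W : Type*} (G : SimpleGraph W) [Fintype W] : Prop :=
  2 ≤ Fintype.card W ∧
    ∀ A B : Finset W, IsIndep G A → IsIndep G B → Disjoint A B →
      ∃ A' B' : Finset W, IsIndep G A' ∧ IsIndep G B' ∧ Disjoint A' B' ∧
        A ⊆ A' ∧ B ⊆ B' ∧ A'.card = indepNum G ∧ B'.card = indepNum G

section Aux

open Finset

lemma isIndep_mono {W : Type*} {G : SimpleGraph W} {s t : Finset W}
    (h : IsIndep G t) (hsub : s ⊆ t) : IsIndep G s :=
  fun x hx y hy => h x (hsub hx) y (hsub hy)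

lemma isIndep_empty {W : Type*} (G : SimpleGraph W) : IsIndep G ∅ := by
  intro x hx; simp at hx

lemma indepNum_bddAbove {W : Type*} (G : SimpleGraph W) [Fintype W] :
    BddAbove {n | ∃ s : Finset W, IsIndep G s ∧ s.card = n} := by
  refine ⟨Fintype.card W, fun n hn => ?_⟩
  obtain ⟨t, _, ht⟩ := hn
  exact ht ▸ (t.card_le_univ.trans_eq Finset.card_univ)

lemma card_le_indepNum {W : Type*} (G : SimpleGraph W) [Fintype W]
    {s : Finset W} (hs : IsIndep G s) : s.card ≤ indepNum G :=
  le_csSup (indepNum_bddAbove G) ⟨s, hs, rfl⟩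

lemma exists_indep_card_eq {W : Type*} (G : SimpleGraph W) [Fintype W] :
    ∃ s : Finset W, IsIndep G s ∧ s.card = indepNum G := by
  have h0 : (0 : ℕ) ∈ {n | ∃ s : Finset W, IsIndep G s ∧ s.card = n} :=
    ⟨∅, isIndep_empty G, Finset.card_empty⟩
  exact Nat.sSup_mem ⟨0, h0⟩ (indepNum_bddAbove G)

lemma exists_maxIndep_superset {W : Type*} [Fintype W] (G : SimpleGraph W) {F : Finset W}
    (hF : IsIndep G F) : ∃ M : Finset W, IsMaxIndep G M ∧ F ⊆ M := by
  have hne : (univ.filter (fun t : Finset W => IsIndep G t ∧ F ⊆ t)).Nonempty :=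
    ⟨F, by simp [hF]⟩
  obtain ⟨M, hM, hmax⟩ := Finset.exists_max_image _ Finset.card hne
  simp only [mem_filter, mem_univ, true_and] at hM
  refine ⟨M, ⟨hM.1, fun t ht hsub => ?_⟩, hM.2⟩
  have hle : t.card ≤ M.card := by
    apply hmax
    simp only [mem_filter, mem_univ, true_and]
    exact ⟨ht, hM.2.trans hsub⟩
  exact (Finset.eq_of_subset_of_card_le hsub hle).symm

lemma delNbhd_adj {V : Type*} (G : SimpleGraph V) (F : Set V)
    (a b : offNbhd G F) : (delNbhd G F).Adj a b ↔ G.Adj ↑a ↑b := Iff.rfl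

lemma indepNum_delNbhd_add {V : Type*} [Fintype V] (G : SimpleGraph V) (hwc : WellCovered G)
    {F : Finset V} (hF : IsIndep G F) :
    indepNum (delNbhd G (F : Set V)) + F.card = indepNum G := by
  apply le_antisymm
  · obtain ⟨S, hS, hScard⟩ := exists_indep_card_eq (delNbhd G (F : Set V))
    rw [← hScard]
    set T : Finset V := F ∪ S.map (Function.Embedding.subtype _) with hT
    have hmem : ∀ x ∈ S.map (Function.Embedding.subtype fun w => w ∈ offNbhd G (F : Set V)),
        x ∈ offNbhd G (F : Set V) := by
      intro x hx
      obtain ⟨a, _, rfl⟩ := Finset.mem_map.mp hx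
      exact a.2
    have hdisj : Disjoint F (S.map (Function.Embedding.subtype _)) := by
      rw [Finset.disjoint_right]
      intro x hx hxF
      exact (hmem x hx).1 (Finset.mem_coe.mpr hxF)
    have hTindep : IsIndep G T := by
      intro x hx y hy
      rcases Finset.mem_union.mp hx with hxF | hxS
      · rcases Finset.mem_union.mp hy with hyF | hyS
        · exact hF x hxF y hyF
        · exact (hmem y hyS).2 x (Finset.mem_coe.mpr hxF)
      · rcases Finset.mem_union.mp hy with hyF | hyS
        · intro hadj
          exact (hmem x hxS).2 y (Finset.mem_coe.mpr hyF) hadj.symm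
        · obtain ⟨a, ha, rfl⟩ := Finset.mem_map.mp hxS
          obtain ⟨b, hb, rfl⟩ := Finset.mem_map.mp hyS
          exact hS a ha b hb
    have hcard : T.card = F.card + S.card := by
      rw [hT, Finset.card_union_of_disjoint hdisj, Finset.card_map]
    have := card_le_indepNum G hTindep
    omega
  · obtain ⟨M, hM, hFM⟩ := exists_maxIndep_superset G hF
    have hMcard := hwc M hM
    set S : Finset (offNbhd G (F : Set V)) :=
      (M \ F).subtype (fun w => w ∈ offNbhd G (F : Set V)) with hSdef
    have hall : ∀ w ∈ M \ F, w ∈ offNbhd G (F : Set V) := by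
      intro w hw
      obtain ⟨hwM, hwF⟩ := Finset.mem_sdiff.mp hw
      exact (⟨fun h => hwF (Finset.mem_coe.mp h),
        fun u hu => hM.1 u (Finset.mem_coe.mp hu |> hFM) w hwM⟩ : _ ∧ _)
    have hScard : S.card = M.card - F.card := by
      rw [hSdef, Finset.card_subtype, Finset.filter_true_of_mem hall, Finset.card_sdiff_of_subset hFM]
    have hSindep : IsIndep (delNbhd G (F : Set V)) S := by
      intro a ha b hb
      rw [delNbhd_adj]
      have haM := (Finset.mem_sdiff.mp (Finset.mem_subtype.mp ha)).1
      have hbM := (Finset.mem_sdiff.mp (Finset.mem_subtype.mp hb)).1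
      exact hM.1 ↑a haM ↑b hbM
    have h1 := card_le_indepNum _ hSindep
    have h2 : F.card ≤ M.card := Finset.card_le_card hFM
    omega

lemma eval_indepPoly {W : Type*} [Fintype W] (G : SimpleGraph W) (t : ℚ) :
    (indepPoly G).eval t =
      ∑ s ∈ Finset.univ.filter (fun s : Finset W => IsIndep G s), t ^ s.card := by
  simp [indepPoly, Polynomial.eval_finset_sum]

lemma eval_delNbhd {V : Type*} [Fintype V] (G : SimpleGraph V) (F : Finset V) (y : ℚ) :
    (indepPoly (delNbhd G (F : Set V))).eval y =
      ∑ S ∈ Finset.univ.filter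
        (fun S : Finset V => IsIndep G S ∧ ↑S ⊆ offNbhd G (F : Set V)), y ^ S.card := by
  rw [eval_indepPoly]
  refine Finset.sum_bij'
    (i := fun s _ => s.map (Function.Embedding.subtype _))
    (j := fun S _ => S.subtype (fun w => w ∈ offNbhd G (F : Set V)))
    ?_ ?_ ?_ ?_ ?_
  · intro s hs
    simp only [mem_filter, mem_univ, true_and] at hs ⊢
    constructor
    · intro x hx y hy
      obtain ⟨a, ha, rfl⟩ := Finset.mem_map.mp hx
      obtain ⟨b, hb, rfl⟩ := Finset.mem_map.mp hy
      exact hs a ha b hb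
    · intro x hx
      obtain ⟨a, _, rfl⟩ := Finset.mem_map.mp (Finset.mem_coe.mp hx)
      exact a.2
  · intro S hS
    simp only [mem_filter, mem_univ, true_and] at hS ⊢
    intro a ha b hb
    rw [delNbhd_adj]
    exact hS.1 ↑a (Finset.mem_subtype.mp ha) ↑b (Finset.mem_subtype.mp hb)
  · intro s _
    ext a
    simp [Finset.mem_subtype, Finset.mem_map, Function.Embedding.coe_subtype,
      Subtype.coe_injective.eq_iff]
  · intro S hS
    simp only [mem_filter, mem_univ, true_and] at hS
    ext x
    constructor
    · intro hx
      obtain ⟨a, ha, rfl⟩ := Finset.mem_map.mp hx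
      exact Finset.mem_subtype.mp ha
    · intro hx
      exact Finset.mem_map.mpr ⟨⟨x, hS.2 (Finset.mem_coe.mpr hx)⟩, Finset.mem_subtype.mpr hx, rfl⟩
  · intro s _
    rw [Finset.card_map]

lemma key_identity {V : Type*} [Fintype V] (G : SimpleGraph V) (t y : ℚ) :
    ∑ F ∈ Finset.univ.filter (fun F : Finset V => IsIndep G F),
      t ^ F.card * ∑ S ∈ Finset.univ.filter
        (fun S : Finset V => IsIndep G S ∧ ↑S ⊆ offNbhd G (F : Set V)), y ^ S.card
    = ∑ T ∈ Finset.univ.filter (fun T : Finset V => IsIndep G T), (t + y) ^ T.card := by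
  have hrhs : ∀ T : Finset V, (t + y) ^ T.card
      = ∑ F ∈ T.powerset, t ^ F.card * y ^ (T \ F).card := by
    intro T
    calc (t + y) ^ T.card = ∏ _i ∈ T, (t + y) := by rw [Finset.prod_const]
    _ = ∑ F ∈ T.powerset, (∏ _i ∈ F, t) * ∏ _i ∈ T \ F, y :=
        Finset.prod_add (fun _ => t) (fun _ => y) T
    _ = _ := by simp [Finset.prod_const]
  simp_rw [hrhs, Finset.mul_sum]
  rw [Finset.sum_sigma', Finset.sum_sigma']
  refine Finset.sum_bij'
    (i := fun p _ => (⟨p.1 ∪ p.2, p.1⟩ : Σ _ : Finset V, Finset V))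
    (j := fun p _ => (⟨p.2, p.1 \ p.2⟩ : Σ _ : Finset V, Finset V))
    ?_ ?_ ?_ ?_ ?_
  · rintro ⟨F, S⟩ hp
    simp only [Finset.mem_sigma, mem_filter, mem_univ, true_and] at hp ⊢
    obtain ⟨hF, hS, hSoff⟩ := hp
    constructor
    · intro x hx y hy
      rcases Finset.mem_union.mp hx with hxF | hxS
      · rcases Finset.mem_union.mp hy with hyF | hyS
        · exact hF x hxF y hyF
        · exact (hSoff (Finset.mem_coe.mpr hyS)).2 x (Finset.mem_coe.mpr hxF)
      · rcases Finset.mem_union.mp hy with hyF | hyS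
        · intro hadj
          exact (hSoff (Finset.mem_coe.mpr hxS)).2 y (Finset.mem_coe.mpr hyF) hadj.symm
        · exact hS x hxS y hyS
    · exact Finset.mem_powerset.mpr Finset.subset_union_left
  · rintro ⟨T, F⟩ hp
    simp only [Finset.mem_sigma, mem_filter, mem_univ, true_and] at hp ⊢
    obtain ⟨hT, hFT⟩ := hp
    have hFT' := Finset.mem_powerset.mp hFT
    refine ⟨isIndep_mono hT hFT', isIndep_mono hT Finset.sdiff_subset, ?_⟩
    intro w hw
    obtain ⟨hwT, hwF⟩ := Finset.mem_sdiff.mp (Finset.mem_coe.mp hw)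
    exact (⟨fun h => hwF (Finset.mem_coe.mp h),
      fun u hu => hT u (hFT' (Finset.mem_coe.mp hu)) w hwT⟩ : _ ∧ _)
  · rintro ⟨F, S⟩ hp
    simp only [Finset.mem_sigma, mem_filter, mem_univ, true_and] at hp
    obtain ⟨_, _, hSoff⟩ := hp
    have hdisj : Disjoint F S := by
      rw [Finset.disjoint_right]
      intro x hx hxF
      exact (hSoff (Finset.mem_coe.mpr hx)).1 (Finset.mem_coe.mpr hxF)
    simp [Finset.union_sdiff_cancel_left hdisj]
  · rintro ⟨T, F⟩ hp
    simp only [Finset.mem_sigma, mem_filter, mem_univ, true_and] at hp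
    have hFT' := Finset.mem_powerset.mp hp.2
    have : F ∪ T \ F = T := Finset.union_sdiff_of_subset hFT'
    simp only [this]
  · rintro ⟨F, S⟩ hp
    simp only [Finset.mem_sigma, mem_filter, mem_univ, true_and] at hp
    obtain ⟨_, _, hSoff⟩ := hp
    have hdisj : Disjoint F S := by
      rw [Finset.disjoint_right]
      intro x hx hxF
      exact (hSoff (Finset.mem_coe.mpr hx)).1 (Finset.mem_coe.mpr hxF)
    simp [Finset.union_sdiff_cancel_left hdisj]

end Aux

theorem eval_neg_half_eq_zero_of_eulerian {V : Type*} [Fintype V] (G : SimpleGraph V)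
    (hwc : WellCovered G)
    (heuler : ∀ F : Finset V, IsIndep G F →
      (indepPoly (delNbhd G (F : Set V))).eval (-1 : ℚ) =
        (-1 : ℚ) ^ indepNum (delNbhd G (F : Set V)))
    (hodd : Odd (indepNum G)) :
    (indepPoly G).eval (-(1 / 2) : ℚ) = 0 := by
  have h0 : (indepPoly G).eval (-(1 / 2) : ℚ) =
      ∑ T ∈ Finset.univ.filter (fun T : Finset V => IsIndep G T), (-(1 / 2) : ℚ) ^ T.card :=
    eval_indepPoly G _
  have h3 : ((1 : ℚ) / 2 + -1) = -(1 / 2) := by norm_num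
  have h2 := key_identity G (1 / 2) (-1)
  rw [h3] at h2
  have h4 : ∀ F ∈ Finset.univ.filter (fun F : Finset V => IsIndep G F),
      ((1 : ℚ) / 2) ^ F.card * ∑ S ∈ Finset.univ.filter
        (fun S : Finset V => IsIndep G S ∧ ↑S ⊆ offNbhd G (F : Set V)), (-1 : ℚ) ^ S.card
      = -(-(1 / 2) : ℚ) ^ F.card := by
    intro F hF
    simp only [Finset.mem_filter, Finset.mem_univ, true_and] at hF
    rw [← eval_delNbhd G F (-1), heuler F hF]
    have hαF := indepNum_delNbhd_add G hwc hF
    have hsq : ((-1 : ℚ) ^ F.card) * ((-1 : ℚ) ^ F.card) = 1 := by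
      rw [← pow_add]
      exact Even.neg_one_pow ⟨F.card, by ring⟩
    have hsign : (-1 : ℚ) ^ indepNum (delNbhd G (F : Set V)) = -(-1 : ℚ) ^ F.card := by
      have h5 : (-1 : ℚ) ^ indepNum (delNbhd G (F : Set V)) * (-1 : ℚ) ^ F.card = -1 := by
        rw [← pow_add, hαF]
        exact hodd.neg_one_pow
      calc (-1 : ℚ) ^ indepNum (delNbhd G (F : Set V))
          = (-1 : ℚ) ^ indepNum (delNbhd G (F : Set V)) * (((-1 : ℚ) ^ F.card) *
            ((-1 : ℚ) ^ F.card)) := by rw [hsq, mul_one]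
        _ = ((-1 : ℚ) ^ indepNum (delNbhd G (F : Set V)) * (-1 : ℚ) ^ F.card) *
            (-1 : ℚ) ^ F.card := by ring
        _ = -(-1 : ℚ) ^ F.card := by rw [h5]; ring
    rw [hsign]
    have hhalf : (-(1 / 2) : ℚ) = (-1) * (1 / 2) := by norm_num
    rw [hhalf, mul_pow]
    ring
  rw [Finset.sum_congr rfl h4] at h2
  rw [Finset.sum_neg_distrib] at h2
  rw [← h0] at h2
  linarith
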